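/- arXiv:1703.08121 — 2 statements merged into one kernel-verified Lean document; each statement's English description precedes it below -/
import Mathlib

section
/- Let G be a locally compact second countable group acting continuously, properly, and freely on a locally compact second countable Hausdorff space Ω, and suppose the quotient Ω/G is compact. Then there exists a bounded Borel section s : Ω/G → Ω of the quotient map, i.e., a Borel map whose composition with the quotient map is the identity and whose image is contained in a compact subset of Ω. -/
open Set

/-- Auxiliary decreasing chain of sets used to select the "lexicographically least"
point of a compact set with respect to a separating family of functions `e`. -/
private def selChain {Ω : Type*} (e : ℕ → Ω → ℝ) (F : Set Ω) : ℕ → Set Ω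
  | 0 => F
  | n + 1 => {x ∈ selChain e F n | e n x = sInf (e n '' selChain e F n)}

private theorem selChain_succ_subset {Ω : Type*} (e : ℕ → Ω → ℝ) (F : Set Ω) (n : ℕ) :
    selChain e F (n + 1) ⊆ selChain e F n :=
  sep_subset _ _

private theorem selChain_subset {Ω : Type*} (e : ℕ → Ω → ℝ) (F : Set Ω) :
    ∀ n, selChain e F n ⊆ F
  | 0 => subset_rfl
  | n + 1 => (selChain_succ_subset e F n).trans (selChain_subset e F n)

private theorem selChain_isCompact_nonempty {Ω : Type*} [TopologicalSpace Ω] [T2Space Ω]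
    (e : ℕ → Ω → ℝ) (he : ∀ n, Continuous (e n)) {F : Set Ω} (hF : IsCompact F)
    (hFne : F.Nonempty) : ∀ n, IsCompact (selChain e F n) ∧ (selChain e F n).Nonempty := by
  intro n
  induction n with
  | zero => exact ⟨hF, hFne⟩
  | succ n ih =>
    obtain ⟨hC, hCne⟩ := ih
    have himg : IsCompact (e n '' selChain e F n) := hC.image (he n)
    have hmem : sInf (e n '' selChain e F n) ∈ e n '' selChain e F n :=
      himg.sInf_mem (hCne.image _)
    obtain ⟨x₀, hx₀, hx₀e⟩ := hmem
    constructor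
    · have : selChain e F (n + 1) =
        selChain e F n ∩ (e n) ⁻¹' {sInf (e n '' selChain e F n)} := by
        ext x; simp [selChain, Set.mem_sep_iff]
      rw [this]
      exact hC.inter_right (isClosed_singleton.preimage (he n))
    · exact ⟨x₀, hx₀, hx₀e⟩

/-- If an lcsc group `G` acts continuously, properly and freely on an lcsc Hausdorff space `Ω`
with compact quotient `Ω/G`, then the quotient map admits a bounded Borel section. -/
theorem stmt_9 {G Ω : Type*} [Group G] [TopologicalSpace G] [IsTopologicalGroup G]
    [LocallyCompactSpace G] [SecondCountableTopology G]
    [TopologicalSpace Ω] [T2Space Ω] [LocallyCompactSpace Ω] [SecondCountableTopology Ω]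
    [MeasurableSpace Ω] [BorelSpace Ω]
    [MulAction G Ω] [ContinuousSMul G Ω]
    (hproper : IsProperMap (fun p : G × Ω => (p.1 • p.2, p.2)))
    (hfree : ∀ (g : G) (x : Ω), g • x = x → g = 1)
    [CompactSpace (Quotient (MulAction.orbitRel G Ω))] :
    ∃ s : Quotient (MulAction.orbitRel G Ω) → Ω,
      Measurable s ∧ (∀ x, Quotient.mk'' (s x) = x) ∧
      ∃ K : Set Ω, IsCompact K ∧ Set.range s ⊆ K := by
  classical
  haveI : ProperSMul G Ω := ⟨hproper⟩
  haveI hT2Q : T2Space (Quotient (MulAction.orbitRel G Ω)) :=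
    t2Space_quotient_mulAction_of_properSMul (G := G) (X := Ω)
  set Q := Quotient (MulAction.orbitRel G Ω) with hQ
  let π : Ω → Q := Quotient.mk''
  have hπcont : Continuous π := continuous_quotient_mk'
  have hπopen : IsOpenMap π := MulAction.isOpenQuotientMap_quotientMk.isOpenMap
  -- a compact set `K` meeting every orbit
  obtain ⟨K, hK, hKcov⟩ : ∃ K : Set Ω, IsCompact K ∧ ∀ q : Q, ∃ x ∈ K, π x = q := by
    choose N hNc hNmem using fun x : Ω => exists_compact_mem_nhds x
    have hcov : univ ⊆ ⋃ x : Ω, π '' interior (N x) := by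
      intro q _
      obtain ⟨y, rfl⟩ := q.exists_rep
      exact mem_iUnion.2 ⟨y, ⟨y, mem_interior_iff_mem_nhds.2 (hNmem y), rfl⟩⟩
    obtain ⟨t, ht⟩ := isCompact_univ.elim_finite_subcover
      (fun x : Ω => π '' interior (N x)) (fun x => hπopen _ isOpen_interior) hcov
    refine ⟨⋃ x ∈ t, N x, t.isCompact_biUnion (fun x _ => hNc x), fun q => ?_⟩
    obtain ⟨x, hxt, y, hy, hyq⟩ := by simpa using ht (mem_univ q)
    exact ⟨y, mem_biUnion hxt (interior_subset hy), hyq⟩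
  -- a separating family of continuous functions
  obtain ⟨f, hf⟩ := TopologicalSpace.exists_embedding_l_infty Ω
  let e : ℕ → Ω → ℝ := fun n x => f x n
  have he : ∀ n, Continuous (e n) := fun n =>
    (continuous_eval_const n).comp hf.continuous
  have einj : ∀ x y : Ω, (∀ n, e n x = e n y) → x = y := fun x y h =>
    hf.injective (BoundedContinuousFunction.ext h)
  -- the chain of compact sets in each fiber
  let C : ℕ → Q → Set Ω := fun n q => selChain e (K ∩ π ⁻¹' {q}) n
  have hfib : ∀ q : Q, IsCompact (K ∩ π ⁻¹' {q}) := fun q =>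
    hK.inter_right (isClosed_singleton.preimage hπcont)
  have hfibne : ∀ q : Q, (K ∩ π ⁻¹' {q}).Nonempty := fun q => by
    obtain ⟨x, hx, hxq⟩ := hKcov q; exact ⟨x, hx, by simpa using hxq⟩
  have hCc : ∀ n (q : Q), IsCompact (C n q) := fun n q =>
    (selChain_isCompact_nonempty e he (hfib q) (hfibne q) n).1
  have hCne : ∀ n (q : Q), (C n q).Nonempty := fun n q =>
    (selChain_isCompact_nonempty e he (hfib q) (hfibne q) n).2
  have hCK : ∀ n (q : Q), C n q ⊆ K := fun n q =>
    (selChain_subset e _ n).trans inter_subset_left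
  have hCcl : ∀ n (q : Q), IsClosed (C n q) := fun n q => (hCc n q).isClosed
  -- closed sets in the quotient are measurable
  have measClosed : ∀ S : Set Q, IsClosed S → MeasurableSet S := fun S hS =>
    measurableSet_quotient.2 (hS.preimage hπcont).measurableSet
  -- key measurability of hitting sets
  have key : ∀ n, ∀ A : Set Ω, IsCompact A → MeasurableSet {q : Q | (C n q ∩ A).Nonempty} := by
    intro n
    induction n with
    | zero =>
      intro A hA
      have : {q : Q | (C 0 q ∩ A).Nonempty} = π '' (K ∩ A) := by
        ext q
        simp only [C, selChain, mem_setOf_eq, Set.Nonempty, mem_inter_iff, mem_preimage,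
          mem_singleton_iff, mem_image]
        constructor
        · rintro ⟨x, ⟨⟨hxK, hxq⟩, hxA⟩⟩; exact ⟨x, ⟨hxK, hxA⟩, hxq⟩
        · rintro ⟨x, ⟨hxK, hxA⟩, hxq⟩; exact ⟨x, ⟨⟨hxK, hxq⟩, hxA⟩⟩
      rw [this]
      exact measClosed _ (((hK.inter_right hA.isClosed).image hπcont).isClosed)
    | succ n ih =>
      intro A hA
      have step : ∀ q : Q, (C (n + 1) q ∩ A).Nonempty ↔
          ∀ r : ℚ, (C n q ∩ (K ∩ (e n) ⁻¹' Iic (r : ℝ))).Nonempty →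
            (C n q ∩ (A ∩ (K ∩ (e n) ⁻¹' Iic (r : ℝ)))).Nonempty := by
        intro q
        constructor
        · rintro ⟨x, ⟨hxC, hxe⟩, hxA⟩ r ⟨y, hyC, hyK, hyr⟩
          have hbdd : BddBelow (e n '' C n q) := ((hCc n q).image (he n)).bddBelow
          have hle : e n x ≤ e n y := by
            rw [hxe]; exact csInf_le hbdd ⟨y, hyC, rfl⟩
          exact ⟨x, hxC, hxA, hCK n q hxC, le_trans hle hyr⟩
        · intro h
          set m := sInf (e n '' C n q) with hm
          have hmem : m ∈ e n '' C n q :=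
            ((hCc n q).image (he n)).sInf_mem ((hCne n q).image _)
          obtain ⟨x₀, hx₀, hx₀e⟩ := hmem
          obtain ⟨r₀, hr₀⟩ := exists_rat_gt m
          let ι := {r : ℚ // m ≤ (r : ℝ)}
          haveI : Nonempty ι := ⟨⟨r₀, hr₀.le⟩⟩
          have hSne : ∀ r : ι, (C n q ∩ (A ∩ (K ∩ (e n) ⁻¹' Iic (r : ℝ)))).Nonempty := by
            intro r
            refine h r ⟨x₀, hx₀, hCK n q hx₀, ?_⟩
            simp only [mem_preimage, mem_Iic]
            rw [hx₀e]; exact r.2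
          have hScl : ∀ r : ι, IsClosed (C n q ∩ (A ∩ (K ∩ (e n) ⁻¹' Iic (r : ℝ)))) :=
            fun r => (hCcl n q).inter (hA.isClosed.inter
              (hK.isClosed.inter (isClosed_Iic.preimage (he n))))
          have hSc : ∀ r : ι, IsCompact (C n q ∩ (A ∩ (K ∩ (e n) ⁻¹' Iic (r : ℝ)))) :=
            fun r => (hCc n q).inter_right (hA.isClosed.inter
              (hK.isClosed.inter (isClosed_Iic.preimage (he n))))
          have hdir : Directed (· ⊇ ·)
              (fun r : ι => C n q ∩ (A ∩ (K ∩ (e n) ⁻¹' Iic (r : ℝ)))) := by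
            intro r s
            refine ⟨⟨min r.1 s.1, ?_⟩, ?_, ?_⟩
            · push_cast; exact le_min r.2 s.2
            · intro x hx
              refine ⟨hx.1, hx.2.1, hx.2.2.1, ?_⟩
              have := hx.2.2.2
              simp only [mem_preimage, mem_Iic] at this ⊢
              exact this.trans (by push_cast; exact min_le_left _ _)
            · intro x hx
              refine ⟨hx.1, hx.2.1, hx.2.2.1, ?_⟩
              have := hx.2.2.2
              simp only [mem_preimage, mem_Iic] at this ⊢
              exact this.trans (by push_cast; exact min_le_right _ _)
          obtain ⟨x, hx⟩ := IsCompact.nonempty_iInter_of_directed_nonempty_isCompact_isClosed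
            _ hdir hSne hSc hScl
          simp only [mem_iInter] at hx
          have hxD : x ∈ C n q := (hx ⟨r₀, hr₀.le⟩).1
          have hxA : x ∈ A := (hx ⟨r₀, hr₀.le⟩).2.1
          have hxle : e n x ≤ m := by
            by_contra hlt
            push_neg at hlt
            obtain ⟨r, hr1, hr2⟩ := exists_rat_btwn hlt
            have := (hx ⟨r, hr1.le⟩).2.2.2
            simp only [mem_preimage, mem_Iic] at this
            exact absurd this (not_le.2 hr2)
          have hxge : m ≤ e n x :=
            csInf_le ((hCc n q).image (he n)).bddBelow ⟨x, hxD, rfl⟩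
          exact ⟨x, ⟨hxD, le_antisymm hxle hxge⟩, hxA⟩
      have heq : {q : Q | (C (n + 1) q ∩ A).Nonempty} =
          ⋂ r : ℚ, ({q : Q | (C n q ∩ (K ∩ (e n) ⁻¹' Iic (r : ℝ))).Nonempty}ᶜ ∪
            {q : Q | (C n q ∩ (A ∩ (K ∩ (e n) ⁻¹' Iic (r : ℝ)))).Nonempty}) := by
        ext q
        simp only [mem_iInter, mem_union, mem_compl_iff, mem_setOf_eq, step q, imp_iff_not_or]
      rw [heq]
      refine MeasurableSet.iInter fun r => MeasurableSet.union ?_ ?_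
      · exact (ih _ (hK.inter_right (isClosed_Iic.preimage (he n)))).compl
      · exact ih _ (hA.inter_right (hK.isClosed.inter (isClosed_Iic.preimage (he n))))
  -- the section: unique point of the intersection of the chain
  have hIne : ∀ q : Q, (⋂ n, C n q).Nonempty := fun q =>
    IsCompact.nonempty_iInter_of_sequence_nonempty_isCompact_isClosed _
      (fun n => selChain_succ_subset e _ n) (fun n => hCne n q) (hCc 0 q) (fun n => hCcl n q)
  choose s hs using hIne
  have hs' : ∀ (q : Q) (n : ℕ), s q ∈ C n q := fun q n => mem_iInter.1 (hs q) n
  have huniq : ∀ (q : Q) (x : Ω), (∀ n, x ∈ C n q) → x = s q := by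
    intro q x hx
    refine einj x (s q) fun n => ?_
    have h1 : e n x = sInf (e n '' C n q) := (hx (n + 1)).2
    have h2 : e n (s q) = sInf (e n '' C n q) := (hs' q (n + 1)).2
    rw [h1, h2]
  -- preimages of compact sets
  have hpre : ∀ A : Set Ω, IsCompact A →
      s ⁻¹' A = ⋂ n, {q : Q | (C n q ∩ A).Nonempty} := by
    intro A hA
    ext q
    simp only [mem_preimage, mem_iInter, mem_setOf_eq]
    constructor
    · intro h n; exact ⟨s q, hs' q n, h⟩
    · intro h
      obtain ⟨x, hx⟩ := IsCompact.nonempty_iInter_of_sequence_nonempty_isCompact_isClosed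
        (fun n => C n q ∩ A) (fun n => inter_subset_inter_left _ (selChain_succ_subset e _ n))
        h ((hCc 0 q).inter_right hA.isClosed)
        (fun n => (hCcl n q).inter hA.isClosed)
      simp only [mem_iInter, mem_inter_iff] at hx
      have : x = s q := huniq q x fun n => (hx n).1
      rw [← this]; exact (hx 0).2
  have hmeas : Measurable s := by
    refine measurable_of_isClosed fun F hF => ?_
    have hFU : F = ⋃ n, F ∩ compactCovering Ω n := by
      rw [← inter_iUnion, iUnion_compactCovering, inter_univ]
    rw [hFU, preimage_iUnion]
    refine MeasurableSet.iUnion fun n => ?_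
    rw [hpre _ ((isCompact_compactCovering Ω n).inter_left hF)]
    exact MeasurableSet.iInter fun m =>
      key m _ ((isCompact_compactCovering Ω n).inter_left hF)
  refine ⟨s, hmeas, ?_, K, hK, ?_⟩
  · intro q
    have := hs' q 0
    have h0 : C 0 q = K ∩ π ⁻¹' {q} := rfl
    rw [h0] at this
    simpa using this.2
  · rintro x ⟨q, rfl⟩
    exact hCK 0 q (hs' q 0)
end

section
/- Let G be an lcsc group with a measurable measure-preserving action on a standard Borel probability space (X, μ), and let ω_H : G × X → H be a strict measurable cocycle into an lcsc group H which is proper in the following sense: there is a family of Borel sets 𝒜 in X such that (1) for every compact K ⊆ G and A, B ∈ 𝒜 there is a precompact L ⊆ H with ω_H(g, x) ∈ L for all g ∈ K and almost all x ∈ A ∩ g⁻¹.B, and (2) for every ε > 0 there is A ∈ 𝒜 with μ(X∖A) < ε. If π : H → U(𝓗) is a strongly continuous unitary representation with almost invariant vectors, then the induced representation π̃ of G on L²(X, 𝓗), given by (π̃(g)ξ)(x) = π(ω_H(g, g⁻¹.x))ξ(g⁻¹.x), also has almost invariant vectors. -/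
open MeasureTheory
open scoped ENNReal NNReal

/-- If `ω : G × X → H` is a proper strict measurable cocycle over a pmp action of `G` on a
standard Borel probability space `(X, μ)` and `π` is a strongly continuous unitary
representation of `H` with almost invariant vectors, then the induced representation
`(π̃(g)ξ)(x) = π(ω(g, g⁻¹.x))ξ(g⁻¹.x)` of `G` on `L²(X, 𝓗)` has almost invariant vectors. -/
theorem stmt_18 {G H X 𝓗 : Type*}
    [Group G] [TopologicalSpace G] [IsTopologicalGroup G]
    [LocallyCompactSpace G] [SecondCountableTopology G]
    [MeasurableSpace G] [BorelSpace G]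
    [Group H] [TopologicalSpace H] [IsTopologicalGroup H]
    [LocallyCompactSpace H] [SecondCountableTopology H]
    [MeasurableSpace H] [BorelSpace H]
    [MeasurableSpace X] [StandardBorelSpace X]
    [NormedAddCommGroup 𝓗] [InnerProductSpace ℂ 𝓗] [CompleteSpace 𝓗]
    [SecondCountableTopology 𝓗] [MeasurableSpace 𝓗] [BorelSpace 𝓗]
    (μ : Measure X) [IsProbabilityMeasure μ]
    [MulAction G X] (hact : Measurable fun p : G × X => p.1 • p.2)
    (hmp : ∀ g : G, MeasurePreserving (fun x : X => g • x) μ μ)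
    (ω : G → X → H) (hω : Measurable fun p : G × X => ω p.1 p.2)
    (hcoc : ∀ g₁ g₂ : G, ∀ x : X, ω (g₁ * g₂) x = ω g₁ (g₂ • x) * ω g₂ x)
    -- properness of the cocycle, witnessed by a family `𝒜` of Borel sets:
    (𝒜 : Set (Set X)) (h𝒜meas : ∀ A ∈ 𝒜, MeasurableSet A)
    (h𝒜prop : ∀ K : Set G, IsCompact K → ∀ A ∈ 𝒜, ∀ B ∈ 𝒜,
      ∃ L : Set H, IsCompact (closure L) ∧
        ∀ g ∈ K, ∀ᵐ x ∂μ, x ∈ A ∩ (fun x : X => g • x) ⁻¹' B → ω g x ∈ L)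
    (h𝒜large : ∀ ε > (0 : ℝ), ∃ A ∈ 𝒜, μ Aᶜ < ENNReal.ofReal ε)
    (π : H →* (𝓗 ≃ₗᵢ[ℂ] 𝓗))
    (hπcont : ∀ ξ : 𝓗, Continuous fun h : H => π h ξ)
    (hai : ∀ L : Set H, IsCompact L → ∀ ε > (0 : ℝ),
      ∃ ξ : 𝓗, ‖ξ‖ = 1 ∧ ∀ h ∈ L, ‖π h ξ - ξ‖ < ε) :
    ∀ K : Set G, IsCompact K → ∀ ε > (0 : ℝ),
      ∃ f : X → 𝓗, MemLp f 2 μ ∧ eLpNorm f 2 μ = 1 ∧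
        ∀ g ∈ K,
          eLpNorm (fun x : X => π (ω g (g⁻¹ • x)) (f (g⁻¹ • x)) - f x) 2 μ <
            ENNReal.ofReal ε := by
  intro K hK ε hε
  -- choose A with small complement
  obtain ⟨A, hA𝒜, hAsmall⟩ := h𝒜large ((ε / 6) ^ 2 / 2) (by positivity)
  -- properness: get L
  obtain ⟨L, hLcomp, hL⟩ := h𝒜prop K hK A hA𝒜 A hA𝒜
  -- almost invariant vector for closure L
  obtain ⟨ξ, hξ1, hξinv⟩ := hai (closure L) hLcomp (ε / 3) (by positivity)
  refine ⟨fun _ => ξ, memLp_const ξ, ?_, ?_⟩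
  · rw [eLpNorm_const ξ (by norm_num) (NeZero.ne μ)]
    simp [hξ1, ← ENNReal.coe_eq_one, ← norm_toNNReal]
    rw [← ofReal_norm, hξ1]; simp
  intro g hg
  have hmg : Measurable fun x : X => g⁻¹ • x :=
    hact.comp (measurable_const.prodMk measurable_id)
  have hωg : Measurable fun x : X => ω g x :=
    hω.comp (measurable_const.prodMk measurable_id)
  set F : X → 𝓗 := fun x => π (ω g (g⁻¹ • x)) ξ - ξ with hF
  have hFmeas : Measurable F :=
    (((hπcont ξ).measurable.comp (hωg.comp hmg))).sub measurable_const
  -- the good set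
  set S : Set X := (fun x : X => g⁻¹ • x) ⁻¹' (A ∩ (fun x : X => g • x) ⁻¹' A) with hS
  have hAmeas := h𝒜meas A hA𝒜
  have hgmeas : Measurable fun x : X => g • x :=
    hact.comp (measurable_const.prodMk measurable_id)
  have hSmeas : MeasurableSet S := hmg (hAmeas.inter (hgmeas hAmeas))
  -- a.e. on S, ω g (g⁻¹ • x) ∈ L
  have haeS : ∀ᵐ x ∂μ, x ∈ S → ω g (g⁻¹ • x) ∈ L :=
    (hmp g⁻¹).quasiMeasurePreserving.ae (hL g hg)
  -- measure of Sᶜ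
  have hScompl : μ Sᶜ < ENNReal.ofReal ((ε / 6) ^ 2) := by
    have h1 : μ Sᶜ ≤ μ Aᶜ + μ Aᶜ := by
      have : Sᶜ ⊆ (fun x : X => g⁻¹ • x) ⁻¹' Aᶜ ∪ (fun x : X => g⁻¹ • x) ⁻¹' ((fun x : X => g • x) ⁻¹' Aᶜ) := by
        intro x hx
        simp only [hS, Set.mem_compl_iff, Set.mem_preimage, Set.mem_inter_iff, not_and_or] at hx
        rcases hx with h | h
        · exact Or.inl h
        · exact Or.inr h
      refine le_trans (measure_mono this) (le_trans (measure_union_le _ _) ?_)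
      have e1 : μ ((fun x : X => g⁻¹ • x) ⁻¹' Aᶜ) = μ Aᶜ :=
        (hmp g⁻¹).measure_preimage hAmeas.compl.nullMeasurableSet
      have e2 : μ ((fun x : X => g⁻¹ • x) ⁻¹' ((fun x : X => g • x) ⁻¹' Aᶜ)) = μ Aᶜ := by
        rw [(hmp g⁻¹).measure_preimage ((hgmeas hAmeas.compl).nullMeasurableSet),
          (hmp g).measure_preimage hAmeas.compl.nullMeasurableSet]
      rw [e1, e2]
    calc μ Sᶜ ≤ μ Aᶜ + μ Aᶜ := h1
      _ < ENNReal.ofReal ((ε / 6) ^ 2 / 2) + ENNReal.ofReal ((ε / 6) ^ 2 / 2) :=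
        ENNReal.add_lt_add hAsmall hAsmall
      _ = ENNReal.ofReal ((ε / 6) ^ 2) := by
        rw [← ENNReal.ofReal_add (by positivity) (by positivity)]; ring_nf
  -- split F
  have hsplit : F = S.indicator F + Sᶜ.indicator F := (Set.indicator_self_add_compl S F).symm
  have hb1 : eLpNorm (S.indicator F) 2 μ ≤ ENNReal.ofReal (ε / 3) := by
    have hbd : ∀ᵐ x ∂μ, ‖S.indicator F x‖ ≤ ε / 3 := by
      filter_upwards [haeS] with x hx
      by_cases hxS : x ∈ S
      · rw [Set.indicator_of_mem hxS]
        exact le_of_lt (hξinv _ (subset_closure (hx hxS)))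
      · rw [Set.indicator_of_notMem hxS]; simp; positivity
    calc eLpNorm (S.indicator F) 2 μ ≤ μ Set.univ ^ (2 : ℝ≥0∞).toReal⁻¹ * ENNReal.ofReal (ε / 3) :=
          eLpNorm_le_of_ae_bound hbd
      _ = ENNReal.ofReal (ε / 3) := by simp
  have hb2 : eLpNorm (Sᶜ.indicator F) 2 μ < ENNReal.ofReal (ε / 3) := by
    have hmono : ∀ x, ‖Sᶜ.indicator F x‖ ≤ ‖Sᶜ.indicator (fun _ : X => (2 : ℝ)) x‖ := by
      intro x
      by_cases hx : x ∈ Sᶜ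
      · rw [Set.indicator_of_mem hx, Set.indicator_of_mem hx]
        have h1 : ‖π (ω g (g⁻¹ • x)) ξ‖ = 1 := by
          rw [(π (ω g (g⁻¹ • x))).norm_map]; exact hξ1
        calc ‖F x‖ ≤ ‖π (ω g (g⁻¹ • x)) ξ‖ + ‖ξ‖ := norm_sub_le _ _
          _ = 2 := by rw [h1, hξ1]; norm_num
          _ ≤ ‖(2 : ℝ)‖ := by norm_num
      · rw [Set.indicator_of_notMem hx, Set.indicator_of_notMem hx]
        simp
    calc eLpNorm (Sᶜ.indicator F) 2 μ
        ≤ eLpNorm (Sᶜ.indicator fun _ : X => (2 : ℝ)) 2 μ := eLpNorm_mono hmono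
      _ = (‖(2 : ℝ)‖₊ : ℝ≥0∞) * μ Sᶜ ^ (1 / (2 : ℝ≥0∞).toReal) :=
          eLpNorm_indicator_const hSmeas.compl (by norm_num) (by norm_num)
      _ < (‖(2 : ℝ)‖₊ : ℝ≥0∞) * ENNReal.ofReal (ε / 6) := by
          refine ENNReal.mul_lt_mul_right (a := (‖(2 : ℝ)‖₊ : ℝ≥0∞)) (by simp) ENNReal.coe_ne_top ?_
          have h2 : μ Sᶜ ^ (1 / (2 : ℝ≥0∞).toReal) < (ENNReal.ofReal ((ε / 6) ^ 2)) ^ (1 / (2 : ℝ≥0∞).toReal) := by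
            apply ENNReal.rpow_lt_rpow hScompl; norm_num
          refine lt_of_lt_of_le h2 (le_of_eq ?_)
          rw [ENNReal.ofReal_rpow_of_nonneg (by positivity) (by norm_num)]
          congr 1
          rw [ENNReal.toReal_ofNat, ← Real.rpow_natCast (ε / 6) 2,
            ← Real.rpow_mul (by positivity)]
          norm_num
      _ = ENNReal.ofReal (ε / 3) := by
          rw [show ((‖(2 : ℝ)‖₊ : ℝ≥0∞)) = ENNReal.ofReal 2 by simp [ENNReal.ofReal_ofNat],
            ← ENNReal.ofReal_mul (by norm_num)]
          congr 1; ring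
  have hASM : AEStronglyMeasurable (S.indicator F) μ :=
    (hFmeas.indicator hSmeas).aestronglyMeasurable
  have hASM2 : AEStronglyMeasurable (Sᶜ.indicator F) μ :=
    (hFmeas.indicator hSmeas.compl).aestronglyMeasurable
  calc eLpNorm F 2 μ = eLpNorm (S.indicator F + Sᶜ.indicator F) 2 μ := by rw [← hsplit]
    _ ≤ eLpNorm (S.indicator F) 2 μ + eLpNorm (Sᶜ.indicator F) 2 μ :=
        eLpNorm_add_le hASM hASM2 (by norm_num)
    _ < ENNReal.ofReal (ε / 3) + ENNReal.ofReal (ε / 3) :=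
        ENNReal.add_lt_add_of_le_of_lt (ne_top_of_le_ne_top ENNReal.ofReal_ne_top hb1) hb1 hb2
    _ = ENNReal.ofReal (2 * ε / 3) := by
        rw [← ENNReal.ofReal_add (by positivity) (by positivity)]; ring_nf
    _ < ENNReal.ofReal ε := by
        rw [ENNReal.ofReal_lt_ofReal_iff hε]; linarith
end
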